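/- Let u₁, u₂ : ℝ → (0,∞) be continuous, strictly positive, integrable functions with ∫u₁ = ∫u₂ = 1, let α ∈ (0,1), and let δ > 0. If u₁(x) ≥ δ for every x in the closed interval with endpoints Q_α(u₁) and Q_α(u₂), then |Q_α(u₁) − Q_α(u₂)| ≤ (1/δ) ‖u₁ − u₂‖_L. -/

import Mathlib

open MeasureTheory Real Set

/-- One-dimensional Lipschitz estimate for the `α`-quantile in `L¹`-distance:
if `u₁ ≥ δ` on the closed interval between the two quantiles, then
`|Q_α(u₁) - Q_α(u₂)| ≤ δ⁻¹ ‖u₁ - u₂‖_{L¹}`. -/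
theorem quantile_lipschitz_in_L1_one_dim
    (u₁ u₂ : ℝ → ℝ)
    (h₁c : Continuous u₁) (h₂c : Continuous u₂)
    (h₁p : ∀ x, 0 < u₁ x) (h₂p : ∀ x, 0 < u₂ x)
    (h₁i : Integrable u₁) (h₂i : Integrable u₂)
    (h₁m : ∫ x, u₁ x = 1) (h₂m : ∫ x, u₂ x = 1)
    (α : ℝ) (hα : α ∈ Ioo (0 : ℝ) 1)
    (δ : ℝ) (hδ : 0 < δ)
    (q₁ q₂ : ℝ)
    (hq₁ : ∫ x in Iic q₁, u₁ x = α)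
    (hq₂ : ∫ x in Iic q₂, u₂ x = α)
    (hlow : ∀ x ∈ uIcc q₁ q₂, δ ≤ u₁ x) :
    |q₁ - q₂| ≤ δ⁻¹ * ∫ x, |u₁ x - u₂ x| := by
  have hd : Integrable (fun x => |u₁ x - u₂ x|) := (h₁i.sub h₂i).abs
  have key : ∀ q : ℝ, |(∫ x in Iic q, u₁ x) - ∫ x in Iic q, u₂ x| ≤ ∫ x, |u₁ x - u₂ x| := by
    intro q
    calc |(∫ x in Iic q, u₁ x) - ∫ x in Iic q, u₂ x|
        = |∫ x in Iic q, (u₁ x - u₂ x)| := by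
          rw [integral_sub h₁i.integrableOn h₂i.integrableOn]
      _ ≤ ∫ x in Iic q, |u₁ x - u₂ x| := by
          simpa [Real.norm_eq_abs] using
            norm_integral_le_integral_norm (μ := volume.restrict (Iic q)) fun x => u₁ x - u₂ x
      _ ≤ ∫ x, |u₁ x - u₂ x| :=
          setIntegral_le_integral hd (Filter.Eventually.of_forall fun x => abs_nonneg _)
  have main : ∀ a b : ℝ, a ≤ b → uIcc q₁ q₂ = Icc a b →
      δ * (b - a) ≤ |(∫ x in Iic b, u₁ x) - ∫ x in Iic a, u₁ x| := by
    intro a b hab hs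
    have hsplit : (∫ x in Iic b, u₁ x) - ∫ x in Iic a, u₁ x = ∫ x in Set.Ioc a b, u₁ x := by
      rw [intervalIntegral.integral_Iic_sub_Iic h₁i.integrableOn h₁i.integrableOn,
        intervalIntegral.integral_of_le hab]
    have hmono : ∫ x in Set.Ioc a b, (δ : ℝ) ≤ ∫ x in Set.Ioc a b, u₁ x := by
      apply setIntegral_mono_on (integrableOn_const (by simp) (by simp))
        h₁i.integrableOn measurableSet_Ioc
      intro x hx
      exact hlow x (by rw [hs]; exact Ioc_subset_Icc_self hx)
    have hconst : ∫ x in Set.Ioc a b, (δ : ℝ) = δ * (b - a) := by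
      simp [Real.volume_Ioc, ENNReal.toReal_ofReal (sub_nonneg.2 hab), mul_comm, hab]
    rw [hsplit]
    calc δ * (b - a) ≤ ∫ x in Set.Ioc a b, u₁ x := hconst ▸ hmono
      _ ≤ |∫ x in Set.Ioc a b, u₁ x| := le_abs_self _
  have final : δ * |q₁ - q₂| ≤ ∫ x, |u₁ x - u₂ x| := by
    rcases le_total q₁ q₂ with h | h
    · have := main q₁ q₂ h (uIcc_of_le h)
      rw [hq₁] at this
      have h2 := key q₂
      rw [hq₂] at h2
      calc δ * |q₁ - q₂| = δ * (q₂ - q₁) := by rw [abs_sub_comm, abs_of_nonneg (by linarith)]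
        _ ≤ |(∫ x in Iic q₂, u₁ x) - α| := this
        _ ≤ ∫ x, |u₁ x - u₂ x| := h2
    · have := main q₂ q₁ h (uIcc_of_ge h)
      rw [hq₁] at this
      have h2 := key q₂
      rw [hq₂] at h2
      calc δ * |q₁ - q₂| = δ * (q₁ - q₂) := by rw [abs_of_nonneg (by linarith)]
        _ ≤ |α - ∫ x in Iic q₂, u₁ x| := this
        _ = |(∫ x in Iic q₂, u₁ x) - α| := abs_sub_comm _ _
        _ ≤ ∫ x, |u₁ x - u₂ x| := h2
  calc |q₁ - q₂| = δ⁻¹ * (δ * |q₁ - q₂|) := by field_simp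
    _ ≤ δ⁻¹ * ∫ x, |u₁ x - u₂ x| := by
        exact mul_le_mul_of_nonneg_left final (by positivity)
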